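/- The limit of α·ω_C(α,3) as α → ∞ equals (2·ln 2)/3, i.e. ω_C(α,3) is asymptotic to (2 ln 2)/(3α) ≈ 0.46209/α. -/

import Mathlib

set_option maxHeartbeats 1000000

/-- Ω(t,α,3) = t + α·log₂(1 − (3/8)t² + (1/4)t³) -/
noncomputable def Omega3 (t α : ℝ) : ℝ :=
  t + α * Real.logb 2 (1 - (3 / 8) * t ^ 2 + (1 / 4) * t ^ 3)

/-- ω_C(α,3) = sup_{t∈[0,1]} Ω(t,α,3) -/
noncomputable def omegaC3 (α : ℝ) : ℝ :=
  sSup ((fun t => Omega3 t α) '' Set.Icc (0 : ℝ) 1)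

private lemma Omega3_def' (t α : ℝ) :
    Omega3 t α = t + α * Real.logb 2 (1 - (3 / 8) * t ^ 2 + (1 / 4) * t ^ 3) := rfl

private lemma quad_max (β t : ℝ) (hβ : 0 < β) : t - β*t^2 ≤ 1/(4*β) := by
  rw [le_div_iff₀ (by positivity : (0:ℝ) < 4*β)]
  nlinarith [sq_nonneg (2*β*t - 1)]

private lemma fpos {t : ℝ} (h0 : 0 ≤ t) (h1 : t ≤ 1) :
    (0:ℝ) < 1 - (3/8)*t^2 + (1/4)*t^3 := by nlinarith

private lemma fle1 {t : ℝ} (h0 : 0 ≤ t) (h1 : t ≤ 1) :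
    1 - (3/8)*t^2 + (1/4)*t^3 ≤ 1 := by nlinarith

private lemma omega3_le_one {t α : ℝ} (h0 : 0 ≤ t) (h1 : t ≤ 1) (hα : 0 ≤ α) :
    Omega3 t α ≤ 1 := by
  have hlb : Real.logb 2 (1 - (3/8)*t^2 + (1/4)*t^3) ≤ 0 :=
    Real.logb_nonpos (by norm_num) (fpos h0 h1).le (fle1 h0 h1)
  have := mul_nonpos_of_nonneg_of_nonpos hα hlb
  unfold Omega3; linarith

private lemma bddAbove_S {α : ℝ} (hα : 0 ≤ α) :
    BddAbove ((fun t => Omega3 t α) '' Set.Icc (0 : ℝ) 1) := by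
  refine ⟨1, ?_⟩
  rintro x ⟨t, ht, rfl⟩
  exact omega3_le_one ht.1 ht.2 hα

private lemma le_omegaC3 {t α : ℝ} (h0 : 0 ≤ t) (h1 : t ≤ 1) (hα : 0 ≤ α) :
    Omega3 t α ≤ omegaC3 α :=
  le_csSup (bddAbove_S hα) (Set.mem_image_of_mem _ ⟨h0, h1⟩)

private lemma upper_small {t α δ : ℝ} (hα : 1 ≤ α) (hδ1 : δ ≤ 1)
    (h0 : 0 ≤ t) (h1 : t ≤ 1) (htδ : t ≤ δ) :
    Omega3 t α ≤ 2*Real.log 2/(α*(3-2*δ)) := by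
  have hL2 : (0:ℝ) < Real.log 2 := Real.log_pos (by norm_num)
  have hα0 : (0:ℝ) < α := by linarith
  have hA : (0:ℝ) < α*(3-2*δ) := by nlinarith
  have hlog : Real.log (1 - (3/8)*t^2 + (1/4)*t^3) ≤ -((3-2*δ)/8*t^2) := by
    have h2 := Real.log_le_sub_one_of_pos (fpos h0 h1)
    nlinarith [sq_nonneg t]
  set β := α*(3-2*δ)/(8*Real.log 2) with hβdef
  have hβ : 0 < β := by positivity
  have key : Omega3 t α ≤ t - β*t^2 := by
    rw [Omega3_def', Real.logb, div_eq_mul_inv]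
    have h3 : α * (Real.log (1 - (3/8)*t^2 + (1/4)*t^3) * (Real.log 2)⁻¹)
        ≤ α * (-((3-2*δ)/8*t^2) * (Real.log 2)⁻¹) := by
      gcongr
    have heq : α * (-((3-2*δ)/8*t^2) * (Real.log 2)⁻¹) = -(β*t^2) := by
      field_simp [hβdef]; rw [hβdef]; field_simp
    rw [heq] at h3
    linarith
  have h2 : t - β*t^2 ≤ 1/(4*β) := quad_max β t hβ
  have h3 : 1/(4*β) = 2*Real.log 2/(α*(3-2*δ)) := by
    rw [hβdef]; field_simp; ring
  linarith [key, h2, h3.le]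

private lemma upper_big {t α δ : ℝ} (hα : 0 ≤ α) (hδ0 : 0 < δ)
    (h1 : t ≤ 1) (htδ : δ ≤ t) :
    Omega3 t α ≤ 1 - α*δ^2/(8*Real.log 2) := by
  have hL2 : (0:ℝ) < Real.log 2 := Real.log_pos (by norm_num)
  have h0 : 0 ≤ t := le_trans hδ0.le htδ
  have hlog : Real.log (1 - (3/8)*t^2 + (1/4)*t^3) ≤ -(δ^2/8) := by
    have h2 := Real.log_le_sub_one_of_pos (fpos h0 h1)
    have ht2 : δ^2 ≤ t^2 := by nlinarith
    nlinarith [sq_nonneg t]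
  rw [Omega3_def', Real.logb, div_eq_mul_inv]
  have h3 : α * (Real.log (1 - (3/8)*t^2 + (1/4)*t^3) * (Real.log 2)⁻¹)
      ≤ α * (-(δ^2/8) * (Real.log 2)⁻¹) := by
    gcongr
  have heq : α * (-(δ^2/8) * (Real.log 2)⁻¹) = -(α*δ^2/(8*Real.log 2)) := by
    field_simp
  rw [heq] at h3
  linarith

private lemma lower_bd {α : ℝ} (hα : 1 ≤ α) :
    2*Real.log 2/3 - 1/α ≤ α * Omega3 (4*Real.log 2/3/α) α := by
  have hℓu : Real.log 2 < 0.6931471808 := Real.log_two_lt_d9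
  have hℓl : (0.6931471803:ℝ) < Real.log 2 := Real.log_two_gt_d9
  set ℓ := Real.log 2 with hℓdef
  have hℓ : 0 < ℓ := by linarith
  clear_value ℓ
  have hα0 : (0:ℝ) < α := by linarith
  set t := 4*ℓ/3/α with htdef
  have ht0 : 0 ≤ t := by positivity
  have ht1 : t ≤ 1 := by
    rw [htdef, div_le_one hα0]; linarith
  have hαt : α*t = 4*ℓ/3 := by rw [htdef]; field_simp
  clear_value t
  set s := (3/8)*t^2 - (1/4)*t^3 with hsdef
  have hs0 : 0 ≤ s := by rw [hsdef]; nlinarith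
  have hs38 : s ≤ 3/8*t^2 := by rw [hsdef]; nlinarith
  clear_value s
  have hs12 : s ≤ 1/2 := by nlinarith
  have h1s : 0 < 1 - s := by linarith
  have hlog : -(s + 2*s^2) ≤ Real.log (1-s) := by
    have h := Real.log_le_sub_one_of_pos (inv_pos.mpr h1s)
    rw [Real.log_inv] at h
    have hinv : (1-s)⁻¹ ≤ 1 + s + 2*s^2 := by
      rw [inv_eq_one_div, div_le_iff₀ h1s]
      nlinarith [sq_nonneg s]
    linarith
  have harg : 1 - (3/8)*t^2 + (1/4)*t^3 = 1 - s := by rw [hsdef]; ring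
  have hOm : t + α*(Real.log (1-s)/ℓ) ≤ Omega3 t α := by
    rw [Omega3_def', harg, Real.logb, ← hℓdef]
  have hmono : t - α*((s+2*s^2)/ℓ) ≤ t + α*(Real.log (1-s)/ℓ) := by
    have h1 : α*(-(s+2*s^2)/ℓ) ≤ α*(Real.log (1-s)/ℓ) := by gcongr
    have he : α*(-(s+2*s^2)/ℓ) = -(α*((s+2*s^2)/ℓ)) := by ring
    linarith [he ▸ h1]
  have hsb : s*α^2 ≤ 2*ℓ^2/3 := by
    have h1 : s*α^2 ≤ 3/8*(t*α)^2 := by nlinarith [hs38, sq_nonneg α]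
    have h2 : t*α = 4*ℓ/3 := by linarith [hαt, mul_comm α t]
    rw [h2] at h1; nlinarith
  have hP : α^3*(s+2*s^2) ≤ (2*ℓ^2/3)*α + ℓ := by
    have h34 : α^3 ≤ α^4 := pow_le_pow_right₀ hα (by norm_num)
    have hsq : (s*α^2)*(s*α^2) ≤ (2*ℓ^2/3)*(2*ℓ^2/3) :=
      mul_le_mul hsb hsb (by positivity) (by positivity)
    have h1 : s*α^2*α ≤ (2*ℓ^2/3)*α := mul_le_mul_of_nonneg_right hsb hα0.le
    have h2 : s^2*α^4 ≤ 4*ℓ^4/9 := by nlinarith [hsq]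
    have h3 : s^2*α^3 ≤ s^2*α^4 := mul_le_mul_of_nonneg_left h34 (sq_nonneg s)
    have hc : ℓ^3 ≤ 1 := pow_le_one₀ hℓ.le (by linarith)
    have h4 : 8*ℓ^4/9 ≤ ℓ := by nlinarith [mul_le_mul_of_nonneg_right hc hℓ.le]
    have h5 : α^3*(s+2*s^2) = s*α^2*α + 2*(s^2*α^3) := by ring
    linarith
  have key3 : α^2*((s+2*s^2)/ℓ) ≤ 2*ℓ/3 + 1/α := by
    have he : α^2*((s+2*s^2)/ℓ) = (α^2*(s+2*s^2))/ℓ := by ring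
    rw [he, div_le_iff₀ hℓ]
    have hu : (1/α)*α = 1 := by field_simp
    nlinarith [hP, hu, hα0]
  have hfin : 2*ℓ/3 - 1/α ≤ α*(t - α*((s+2*s^2)/ℓ)) := by
    have he : α*(t - α*((s+2*s^2)/ℓ)) = α*t - α^2*((s+2*s^2)/ℓ) := by ring
    rw [he, hαt]; linarith
  calc 2*ℓ/3 - 1/α ≤ α*(t - α*((s+2*s^2)/ℓ)) := hfin
    _ ≤ α*(t + α*(Real.log (1-s)/ℓ)) := by nlinarith [hmono]
    _ ≤ α * Omega3 t α := by nlinarith [hOm]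

theorem omegaC3_asymptotic :
    Filter.Tendsto (fun α : ℝ => α * omegaC3 α) Filter.atTop
      (nhds (2 * Real.log 2 / 3)) := by
  have hℓu : Real.log 2 < 0.6931471808 := Real.log_two_lt_d9
  have hℓl : (0.6931471803:ℝ) < Real.log 2 := Real.log_two_gt_d9
  have hℓ : (0:ℝ) < Real.log 2 := by linarith
  rw [Metric.tendsto_atTop]
  intro ε hε
  set δ := min 1 (ε/2) with hδdef
  have hδ0 : 0 < δ := lt_min one_pos (by positivity)
  have hδ1 : δ ≤ 1 := min_le_left _ _
  have hδε : δ ≤ ε/2 := min_le_right _ _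
  refine ⟨max (max 1 (16/δ^2)) (2/ε), fun α hαN => ?_⟩
  have hα1 : 1 ≤ α := le_trans (le_trans (le_max_left 1 _) (le_max_left _ _)) hαN
  have hα0 : (0:ℝ) < α := by linarith
  have hα16 : 16/δ^2 ≤ α := le_trans (le_trans (le_max_right 1 _) (le_max_left _ _)) hαN
  have hα2ε : 2/ε ≤ α := le_trans (le_max_right _ _) hαN
  -- upper bound
  have hω_ub : omegaC3 α ≤
      max (2*Real.log 2/(α*(3-2*δ))) (1 - α*δ^2/(8*Real.log 2)) := by
    apply csSup_le (Set.Nonempty.image _ (Set.nonempty_Icc.mpr (by norm_num)))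
    rintro x ⟨t, ht, rfl⟩
    rcases le_total t δ with h | h
    · exact le_max_of_le_left (upper_small hα1 hδ1 ht.1 ht.2 h)
    · exact le_max_of_le_right (upper_big hα0.le hδ0 ht.2 h)
  have hup : α * omegaC3 α - 2 * Real.log 2 / 3 < ε := by
    have h1 : α * omegaC3 α ≤
        max (α * (2*Real.log 2/(α*(3-2*δ)))) (α * (1 - α*δ^2/(8*Real.log 2))) := by
      calc α * omegaC3 α ≤
          α * max (2*Real.log 2/(α*(3-2*δ))) (1 - α*δ^2/(8*Real.log 2)) :=
            mul_le_mul_of_nonneg_left hω_ub hα0.le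
        _ = _ := mul_max_of_nonneg _ _ hα0.le
    have hb1 : α * (2*Real.log 2/(α*(3-2*δ))) < 2 * Real.log 2 / 3 + ε := by
      have he : α * (2*Real.log 2/(α*(3-2*δ))) = 2*Real.log 2/(3-2*δ) := by
        field_simp
      rw [he, div_lt_iff₀ (by linarith : (0:ℝ) < 3-2*δ)]
      nlinarith
    have hb2 : α * (1 - α*δ^2/(8*Real.log 2)) < 2 * Real.log 2 / 3 + ε := by
      have h16 : 16 ≤ α*δ^2 := by
        rw [div_le_iff₀ (by positivity)] at hα16; linarith
      have hquot : 2 ≤ α*δ^2/(8*Real.log 2) := by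
        rw [le_div_iff₀ (by positivity)]; nlinarith
      have hneg : α * (1 - α*δ^2/(8*Real.log 2)) ≤ 0 :=
        mul_nonpos_of_nonneg_of_nonpos hα0.le (by linarith)
      nlinarith
    have := max_lt hb1 hb2
    linarith [le_trans h1 this.le]
  -- lower bound
  have hlow : -ε < α * omegaC3 α - 2 * Real.log 2 / 3 := by
    have h := lower_bd hα1
    have ht0 : (0:ℝ) ≤ 4*Real.log 2/3/α := by positivity
    have ht1 : 4*Real.log 2/3/α ≤ 1 := by
      rw [div_le_one hα0]; linarith
    have h2 : α * Omega3 (4*Real.log 2/3/α) α ≤ α * omegaC3 α :=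
      mul_le_mul_of_nonneg_left (le_omegaC3 ht0 ht1 hα0.le) hα0.le
    have h3 : 2 ≤ α*ε := by
      rw [div_le_iff₀ hε] at hα2ε; linarith
    have h4 : 1/α ≤ ε/2 := by
      rw [div_le_div_iff₀ hα0 (by norm_num : (0:ℝ) < 2)]; linarith
    linarith
  rw [Real.dist_eq, abs_lt]
  exact ⟨hlow, hup⟩
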